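/- arXiv:1807.05742 — 2 statements merged into one kernel-verified Lean document; each statement's English description precedes it below -/
import Mathlib

section
/- For any even integer N ≥ 2, the sum over all 2-divisible partitions A of {1,…,N} (partitions all of whose blocks have even cardinality) of the quantity (−1)^{k(A)+1} · ∏_{B a block of A} (|B| − 1)!, where k(A) is the number of blocks of A, equals (N−1)!!·(N−3)!!. -/
open scoped BigOperators Nat
open Finset

/-- `P` is a partition of `{1,…,N}` presented as a finite set of pairwise disjoint nonempty
blocks whose union is everything. -/
abbrev IsFinsetPartition {N : ℕ} (P : Finset (Finset (Fin N))) : Prop :=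
  (∀ B ∈ P, B.Nonempty) ∧
  (∀ B ∈ P, ∀ C ∈ P, B ≠ C → Disjoint B C) ∧
  (∀ x : Fin N, ∃ B ∈ P, x ∈ B)


variable {N : ℕ}

/-- Partition of a finset `s` into disjoint nonempty blocks. -/
def IsPartOf (s : Finset (Fin N)) (P : Finset (Finset (Fin N))) : Prop :=
  (∀ B ∈ P, B.Nonempty) ∧ (∀ B ∈ P, ∀ C ∈ P, B ≠ C → Disjoint B C) ∧ P.biUnion id = s

instance (s : Finset (Fin N)) : DecidablePred (IsPartOf s) := fun P => by
  unfold IsPartOf; infer_instance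

noncomputable def fpart (s : Finset (Fin N)) : ℤ :=
  ∑ P ∈ Finset.univ.filter (fun P => IsPartOf s P ∧ ∀ B ∈ P, Even B.card),
    ((-1 : ℤ) ^ (P.card + 1) * ∏ B ∈ P, (Nat.factorial (B.card - 1) : ℤ))

lemma fpart_empty : fpart (∅ : Finset (Fin N)) = -1 := by
  have h : Finset.univ.filter (fun P => IsPartOf (∅ : Finset (Fin N)) P ∧ ∀ B ∈ P, Even B.card)
      = {∅} := by
    ext P
    simp only [mem_filter, mem_univ, true_and, mem_singleton]
    constructor
    · rintro ⟨⟨h1, _, h3⟩, _⟩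
      by_contra hne
      obtain ⟨B, hB⟩ := Finset.nonempty_iff_ne_empty.2 hne
      obtain ⟨x, hx⟩ := h1 B hB
      have : x ∈ P.biUnion id := mem_biUnion.2 ⟨B, hB, hx⟩
      rw [h3] at this
      exact absurd this (notMem_empty x)
    · rintro rfl
      refine ⟨⟨by simp, by simp, by simp⟩, by simp⟩
  rw [fpart, h]
  simp

lemma card_even_of_part {s : Finset (Fin N)} {P : Finset (Finset (Fin N))}
    (hP : IsPartOf s P) (he : ∀ B ∈ P, Even B.card) : Even s.card := by
  obtain ⟨h1, h2, h3⟩ := hP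
  rw [← h3]
  have hc : (P.biUnion id).card = ∑ u ∈ P, (id u).card := Finset.card_biUnion h2
  rw [hc]
  exact Finset.even_sum _ he

lemma fpart_odd {s : Finset (Fin N)} (hs : ¬ Even s.card) : fpart s = 0 := by
  rw [fpart]
  apply Finset.sum_eq_zero
  intro P hP
  rw [mem_filter] at hP
  exact absurd (card_even_of_part hP.2.1 hP.2.2) hs

/-- the block of `P` containing `a` -/
def blockOf (a : Fin N) (P : Finset (Finset (Fin N))) : Finset (Fin N) :=
  (P.filter (fun B => a ∈ B)).sup id

lemma blockOf_eq {a : Fin N} {P : Finset (Finset (Fin N))}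
    (h2 : ∀ B ∈ P, ∀ C ∈ P, B ≠ C → Disjoint B C) {B : Finset (Fin N)}
    (hB : B ∈ P) (haB : a ∈ B) : blockOf a P = B := by
  have : P.filter (fun C => a ∈ C) = {B} := by
    ext C
    simp only [mem_filter, mem_singleton]
    constructor
    · rintro ⟨hC, haC⟩
      by_contra hne
      exact Finset.disjoint_left.1 (h2 C hC B hB hne) haC haB
    · rintro rfl; exact ⟨hB, haB⟩
  rw [blockOf, this, Finset.sup_singleton, id]

lemma blockOf_mem {a : Fin N} {s : Finset (Fin N)} {P : Finset (Finset (Fin N))}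
    (hP : IsPartOf s P) (ha : a ∈ s) : blockOf a P ∈ P ∧ a ∈ blockOf a P := by
  obtain ⟨h1, h2, h3⟩ := hP
  have : a ∈ P.biUnion id := by rw [h3]; exact ha
  obtain ⟨B, hB, haB⟩ := mem_biUnion.1 this
  rw [blockOf_eq h2 hB haB]
  exact ⟨hB, haB⟩

lemma part_erase {s : Finset (Fin N)} {P : Finset (Finset (Fin N))} {B : Finset (Fin N)}
    (hP : IsPartOf s P) (hB : B ∈ P) : IsPartOf (s \ B) (P.erase B) := by
  obtain ⟨h1, h2, h3⟩ := hP
  refine ⟨fun C hC => h1 C (mem_of_mem_erase hC),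
    fun C hC D hD hne => h2 C (mem_of_mem_erase hC) D (mem_of_mem_erase hD) hne, ?_⟩
  ext x
  simp only [mem_biUnion, id, mem_sdiff, mem_erase]
  constructor
  · rintro ⟨C, ⟨hCB, hC⟩, hxC⟩
    refine ⟨h3 ▸ mem_biUnion.2 ⟨C, hC, hxC⟩, fun hxB => ?_⟩
    exact Finset.disjoint_left.1 (h2 C hC B hB hCB) hxC hxB
  · rintro ⟨hxs, hxB⟩
    rw [← h3] at hxs
    obtain ⟨C, hC, hxC⟩ := mem_biUnion.1 hxs
    refine ⟨C, ⟨fun h => hxB (h ▸ hxC), hC⟩, hxC⟩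

lemma notMem_of_part_sdiff {s B : Finset (Fin N)} {Q : Finset (Finset (Fin N))}
    (hQ : IsPartOf (s \ B) Q) (hBne : B.Nonempty) : B ∉ Q := by
  intro hB
  obtain ⟨x, hx⟩ := hBne
  have : B ⊆ Q.biUnion id := Finset.subset_biUnion_of_mem id hB
  rw [hQ.2.2] at this
  exact (Finset.mem_sdiff.1 (this hx)).2 hx

lemma part_insert {s B : Finset (Fin N)} {Q : Finset (Finset (Fin N))}
    (hQ : IsPartOf (s \ B) Q) (hBs : B ⊆ s) (hBne : B.Nonempty) :
    IsPartOf s (insert B Q) := by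
  obtain ⟨h1, h2, h3⟩ := hQ
  have hsub : ∀ C ∈ Q, C ⊆ s \ B := fun C hC => h3 ▸ Finset.subset_biUnion_of_mem id hC
  refine ⟨?_, ?_, ?_⟩
  · intro C hC
    rcases mem_insert.1 hC with rfl | hC
    · exact hBne
    · exact h1 C hC
  · have key : ∀ C ∈ Q, Disjoint B C := fun C hC => Finset.disjoint_left.2
      fun x hxB hxC => (Finset.mem_sdiff.1 (hsub C hC hxC)).2 hxB
    intro C hC D hD hne
    rcases mem_insert.1 hC with h | h
    · rcases mem_insert.1 hD with h' | h'
      · exact absurd (h.trans h'.symm) hne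
      · exact h ▸ key D h'
    · rcases mem_insert.1 hD with h' | h'
      · exact h' ▸ (key C h).symm
      · exact h2 C h D h' hne
  · rw [Finset.biUnion_insert, h3, id]
    exact Finset.union_sdiff_of_subset hBs

lemma fpart_rec {s : Finset (Fin N)} {a : Fin N} (ha : a ∈ s) :
    fpart s = -∑ B ∈ s.powerset.filter (fun B => a ∈ B ∧ Even B.card),
      (Nat.factorial (B.card - 1) : ℤ) * fpart (s \ B) := by
  have hmaps : ∀ P ∈ Finset.univ.filter
      (fun P : Finset (Finset (Fin N)) => IsPartOf s P ∧ ∀ B ∈ P, Even B.card),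
      blockOf a P ∈ s.powerset.filter (fun B => a ∈ B ∧ Even B.card) := by
    intro P hP
    rw [mem_filter] at hP
    obtain ⟨hBP, haB⟩ := blockOf_mem hP.2.1 ha
    rw [mem_filter, mem_powerset]
    exact ⟨hP.2.1.2.2 ▸ Finset.subset_biUnion_of_mem id hBP, haB, hP.2.2 _ hBP⟩
  rw [fpart, ← Finset.sum_fiberwise_of_maps_to hmaps]
  rw [← Finset.sum_neg_distrib]
  apply Finset.sum_congr rfl
  intro B hB
  rw [mem_filter, mem_powerset] at hB
  obtain ⟨hBs, haB, hBe⟩ := hB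
  rw [fpart, Finset.mul_sum, ← Finset.sum_neg_distrib]
  refine Finset.sum_bij' (fun P _ => P.erase B) (fun Q _ => insert B Q) ?_ ?_ ?_ ?_ ?_
  · intro P hP
    simp only [Finset.mem_filter, Finset.mem_univ, true_and] at hP ⊢
    obtain ⟨⟨hPart, hEv⟩, hbl⟩ := hP
    have hBP : B ∈ P := hbl ▸ (blockOf_mem hPart ha).1
    exact ⟨part_erase hPart hBP, fun C hC => hEv C (mem_of_mem_erase hC)⟩
  · intro Q hQ
    simp only [Finset.mem_filter, Finset.mem_univ, true_and] at hQ ⊢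
    obtain ⟨hPart, hEv⟩ := hQ
    have hins := part_insert hPart hBs ⟨a, haB⟩
    refine ⟨⟨hins, ?_⟩, blockOf_eq hins.2.1 (mem_insert_self B Q) haB⟩
    intro C hC
    rcases mem_insert.1 hC with rfl | hC
    · exact hBe
    · exact hEv C hC
  · intro P hP
    simp only [Finset.mem_filter, Finset.mem_univ, true_and] at hP
    obtain ⟨⟨hPart, _⟩, hbl⟩ := hP
    exact Finset.insert_erase (hbl ▸ (blockOf_mem hPart ha).1)
  · intro Q hQ
    simp only [Finset.mem_filter, Finset.mem_univ, true_and] at hQ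
    exact Finset.erase_insert (notMem_of_part_sdiff hQ.1 ⟨a, haB⟩)
  · intro P hP
    simp only [Finset.mem_filter, Finset.mem_univ, true_and] at hP
    obtain ⟨⟨hPart, _⟩, hbl⟩ := hP
    have hBP : B ∈ P := hbl ▸ (blockOf_mem hPart ha).1
    have hcard : P.card = (P.erase B).card + 1 := by
      rw [Finset.card_erase_of_mem hBP]
      have : 1 ≤ P.card := Finset.card_pos.2 ⟨B, hBP⟩
      omega
    have hprod : (∏ C ∈ P, (Nat.factorial (C.card - 1) : ℤ))
        = (Nat.factorial (B.card - 1) : ℤ) * ∏ C ∈ P.erase B, (Nat.factorial (C.card - 1) : ℤ) :=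
      (Finset.mul_prod_erase P _ hBP).symm
    rw [hcard, hprod]
    ring

def Ufun (m : ℕ) : ℕ := Nat.doubleFactorial (2*m - 1) * Nat.doubleFactorial (2*m - 3)

lemma Ufun_succ (k : ℕ) : Ufun (k+2) = (2*k+3)*((2*k+1)*Ufun (k+1)) := by
  have h1 : 2*(k+2) - 1 = (2*k+1) + 2 := by omega
  have h2 : 2*(k+2) - 3 = 2*k + 1 := by omega
  have h3 : 2*(k+1) - 1 = 2*k + 1 := by omega
  have h4 : 2*(k+1) - 3 = 2*k - 1 := by omega
  rw [Ufun, Ufun, h1, h2, h3, h4, Nat.doubleFactorial_add_two]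
  have h5 : (2*k+1)‼ = (2*k+1) * (2*k-1)‼ := by
    have : 2*k+1 = (2*k)+1 := rfl
    rw [this, Nat.doubleFactorial_add_one]
  nth_rewrite 2 [h5]
  ring

lemma key_id (k : ℕ) :
    Ufun (k+1) + ∑ i ∈ Finset.range k, (2*k+1).descFactorial (2*i+1) * Ufun (k-i)
      = (2*k+1)! := by
  induction k with
  | zero => simp [Ufun, Nat.doubleFactorial]
  | succ k ih =>
    rw [Finset.sum_range_succ']
    have h0 : (2*(k+1)+1).descFactorial (2*0+1) * Ufun (k+1-0) = (2*k+3) * Ufun (k+1) := by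
      have : (2*(k+1)+1).descFactorial 1 = 2*(k+1)+1 := Nat.descFactorial_one _
      simp only [Nat.mul_zero, Nat.zero_add, this, Nat.sub_zero]
      ring_nf
    have hstep : ∀ i, (2*(k+1)+1).descFactorial (2*(i+1)+1) * Ufun (k+1-(i+1))
        = (2*k+3)*((2*k+2)*((2*k+1).descFactorial (2*i+1) * Ufun (k-i))) := by
      intro i
      have e1 : 2*(k+1)+1 = (2*k+2)+1 := by ring
      have e2 : 2*(i+1)+1 = (2*i+2)+1 := by ring
      have e3 : k+1-(i+1) = k-i := by omega
      rw [e1, e2, e3, Nat.succ_descFactorial_succ]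
      have e4 : (2*k+2) = (2*k+1)+1 := by ring
      have e5 : (2*i+2) = (2*i+1)+1 := by ring
      rw [e4, e5, Nat.succ_descFactorial_succ]
      ring
    have hsum : ∑ i ∈ Finset.range k, (2*(k+1)+1).descFactorial (2*(i+1)+1) * Ufun (k+1-(i+1))
        = (2*k+3)*((2*k+2)*(∑ i ∈ Finset.range k, (2*k+1).descFactorial (2*i+1) * Ufun (k-i))) := by
      rw [Finset.mul_sum, Finset.mul_sum]
      exact Finset.sum_congr rfl fun i _ => hstep i
    rw [hsum, h0, Ufun_succ]
    have hf : (2*(k+1)+1)! = (2*k+3)*((2*k+2)*(2*k+1)!) := by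
      have : 2*(k+1)+1 = ((2*k+1)+1)+1 := by ring
      rw [this, Nat.factorial_succ, Nat.factorial_succ]
    rw [hf, ← ih]
    ring

lemma count_lemma {s : Finset (Fin N)} {a : Fin N} (ha : a ∈ s) {j : ℕ} (hj : 1 ≤ j)
    (hEv : Even j) :
    ((s.powerset.filter (fun B => a ∈ B ∧ Even B.card)).filter (fun B => B.card = j)).card
      = (s.card - 1).choose (j-1) := by
  rw [← Finset.card_erase_of_mem ha, ← Finset.card_powersetCard]
  refine Finset.card_bij' (fun B _ => B.erase a) (fun C _ => insert a C) ?_ ?_ ?_ ?_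
  · intro B hB
    simp only [Finset.mem_filter, Finset.mem_powerset] at hB
    obtain ⟨⟨hBs, haB, _⟩, hcard⟩ := hB
    rw [Finset.mem_powersetCard]
    exact ⟨Finset.erase_subset_erase a hBs, by rw [Finset.card_erase_of_mem haB, hcard]⟩
  · intro C hC
    rw [Finset.mem_powersetCard] at hC
    obtain ⟨hCs, hCcard⟩ := hC
    have haC : a ∉ C := fun h => (Finset.mem_erase.1 (hCs h)).1 rfl
    simp only [Finset.mem_filter, Finset.mem_powerset]
    have hcard : (insert a C).card = j := by
      rw [Finset.card_insert_of_notMem haC, hCcard]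
      omega
    refine ⟨⟨?_, Finset.mem_insert_self a C, hcard ▸ hEv⟩, hcard⟩
    intro x hx
    rcases Finset.mem_insert.1 hx with rfl | hx
    · exact ha
    · exact (Finset.erase_subset a s) (hCs hx)
  · intro B hB
    simp only [Finset.mem_filter, Finset.mem_powerset] at hB
    exact Finset.insert_erase hB.1.2.1
  · intro C hC
    rw [Finset.mem_powersetCard] at hC
    have haC : a ∉ C := fun h => (Finset.mem_erase.1 (hC.1 h)).1 rfl
    exact Finset.erase_insert haC

lemma count_zero {s : Finset (Fin N)} {a : Fin N} {j : ℕ} (hj : ¬ (1 ≤ j ∧ Even j)) :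
    ((s.powerset.filter (fun B => a ∈ B ∧ Even B.card)).filter (fun B => B.card = j)).card
      = 0 := by
  rw [Finset.card_eq_zero, Finset.filter_eq_empty_iff]
  intro B hB
  simp only [Finset.mem_filter, Finset.mem_powerset] at hB
  obtain ⟨_, haB, hEv⟩ := hB
  intro hcard
  have : 1 ≤ B.card := Finset.card_pos.2 ⟨a, haB⟩
  exact hj ⟨hcard ▸ this, hcard ▸ hEv⟩

noncomputable def Ffun (n : ℕ) : ℤ := if n = 0 then -1 else if Even n then (Ufun (n/2) : ℤ) else 0

lemma fpart_eq (n : ℕ) : ∀ (s : Finset (Fin N)), s.card = n → fpart s = Ffun n := by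
  induction n using Nat.strong_induction_on with
  | _ n ih =>
    intro s hs
    by_cases h0 : n = 0
    · subst h0
      rw [Finset.card_eq_zero] at hs
      subst hs
      rw [fpart_empty]
      simp [Ffun]
    by_cases hE : Even n
    swap
    · rw [fpart_odd (by rw [hs]; exact hE)]
      simp [Ffun, h0, hE]
    obtain ⟨k, hk⟩ : ∃ k, n = 2*k + 2 := by
      obtain ⟨r, hr⟩ := hE
      exact ⟨r - 1, by omega⟩
    obtain ⟨a, ha⟩ : s.Nonempty := Finset.card_pos.1 (by omega)
    rw [fpart_rec ha]
    have hterm : ∀ B ∈ s.powerset.filter (fun B => a ∈ B ∧ Even B.card),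
        ((B.card - 1)! : ℤ) * fpart (s \ B)
        = ((B.card - 1)! : ℤ) * Ffun (n - B.card) := by
      intro B hB
      simp only [Finset.mem_filter, Finset.mem_powerset] at hB
      obtain ⟨hBs, haB, _⟩ := hB
      have hcard : (s \ B).card = n - B.card := by rw [Finset.card_sdiff_of_subset hBs, hs]
      have h1 : 1 ≤ B.card := Finset.card_pos.2 ⟨a, haB⟩
      rw [ih _ (by omega) _ hcard]
    rw [Finset.sum_congr rfl hterm]
    have hmaps : ∀ B ∈ s.powerset.filter (fun B => a ∈ B ∧ Even B.card),
        B.card ∈ Finset.range (n+1) := by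
      intro B hB
      simp only [Finset.mem_filter, Finset.mem_powerset] at hB
      have := Finset.card_le_card hB.1
      rw [hs] at this
      exact Finset.mem_range.2 (by omega)
    rw [← Finset.sum_fiberwise_of_maps_to hmaps
      (fun B => ((B.card - 1)! : ℤ) * Ffun (n - B.card))]
    have hinner : ∀ j ∈ Finset.range (n+1),
        ∑ B ∈ (s.powerset.filter (fun B => a ∈ B ∧ Even B.card)).filter (fun B => B.card = j),
          (((B.card - 1)! : ℤ) * Ffun (n - B.card))
        = (((s.powerset.filter (fun B => a ∈ B ∧ Even B.card)).filter
            (fun B => B.card = j)).card : ℤ) * (((j-1)! : ℤ) * Ffun (n-j)) := by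
      intro j _
      rw [Finset.sum_congr rfl (fun B hB => by rw [(Finset.mem_filter.1 hB).2]),
        Finset.sum_const, nsmul_eq_mul]
    rw [Finset.sum_congr rfl hinner]
    -- restrict the sum to even values 2,4,…,n
    have hsub : (Finset.range (k+1)).image (fun i => 2*i+2) ⊆ Finset.range (n+1) := by
      intro j hj
      simp only [Finset.mem_image, Finset.mem_range] at hj ⊢
      omega
    have hzero : ∀ j ∈ Finset.range (n+1), j ∉ (Finset.range (k+1)).image (fun i => 2*i+2) →
        (((s.powerset.filter (fun B => a ∈ B ∧ Even B.card)).filter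
            (fun B => B.card = j)).card : ℤ) * (((j-1)! : ℤ) * Ffun (n-j)) = 0 := by
      intro j hjr hjim
      by_cases hje : 1 ≤ j ∧ Even j
      · exfalso
        apply hjim
        obtain ⟨r, hr⟩ := hje.2
        rw [Finset.mem_range] at hjr
        exact Finset.mem_image.2 ⟨r - 1, Finset.mem_range.2 (by omega), by omega⟩
      · rw [count_zero hje]
        simp
    rw [← Finset.sum_subset hsub hzero]
    rw [Finset.sum_image (fun x _ y _ h => by omega)]
    have hval : ∀ i ∈ Finset.range (k+1),
        (((s.powerset.filter (fun B => a ∈ B ∧ Even B.card)).filter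
            (fun B => B.card = 2*i+2)).card : ℤ) * (((2*i+2-1)! : ℤ) * Ffun (n-(2*i+2)))
        = ((2*k+1).choose (2*i+1) : ℤ) * (((2*i+1)! : ℤ) * Ffun (n-(2*i+2))) := by
      intro i _
      rw [count_lemma ha (by omega) (by exact ⟨i+1, by ring⟩)]
      have e1 : s.card - 1 = 2*k+1 := by omega
      have e2 : 2*i+2-1 = 2*i+1 := by omega
      rw [e1, e2]
    rw [Finset.sum_congr rfl hval]
    rw [Finset.sum_range_succ]
    have hlast : Ffun (n - (2*k+2)) = -1 := by
      have : n - (2*k+2) = 0 := by omega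
      rw [this, Ffun]
      simp
    have hmid : ∀ i ∈ Finset.range k, Ffun (n - (2*i+2)) = (Ufun (k-i) : ℤ) := by
      intro i hi
      rw [Finset.mem_range] at hi
      have e : n - (2*i+2) = 2*(k-i) := by omega
      rw [e, Ffun]
      have h1 : 2*(k-i) ≠ 0 := by omega
      have h2 : Even (2*(k-i)) := ⟨k-i, by ring⟩
      have h3 : 2*(k-i)/2 = k-i := by omega
      simp [h1, h2, h3]
    rw [Finset.sum_congr rfl (fun i hi => by rw [hmid i hi]), hlast]
    -- final arithmetic
    have hFn : Ffun n = (Ufun (k+1) : ℤ) := by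
      rw [Ffun]
      have h3 : n/2 = k+1 := by omega
      simp [h0, hE, h3]
    rw [hFn]
    have hnat : Ufun (k+1) + ∑ i ∈ Finset.range k,
        (2*k+1).choose (2*i+1) * ((2*i+1)! * Ufun (k-i)) = (2*k+1)! := by
      rw [← key_id k]
      congr 1
      refine Finset.sum_congr rfl fun i _ => ?_
      rw [Nat.descFactorial_eq_factorial_mul_choose]
      ring
    have hint : (Ufun (k+1) : ℤ) + ∑ i ∈ Finset.range k,
        ((2*k+1).choose (2*i+1) : ℤ) * (((2*i+1)! : ℤ) * (Ufun (k-i) : ℤ))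
        = ((2*k+1)! : ℤ) := by
      exact_mod_cast congrArg (Nat.cast : ℕ → ℤ) hnat
    have hch : ((2*k+1).choose (2*k+1) : ℤ) = 1 := by
      rw [Nat.choose_self]; norm_num
    rw [hch]
    have e3 : (2*k+1+1-1) = 2*k+1 := by omega
    linarith [hint]

/-- For any even `N ≥ 2`, the sum over all 2-divisible partitions `A` of `{1,…,N}` (partitions
all of whose blocks have even cardinality) of `(-1)^(k(A)+1) · ∏_B (|B|-1)!`, where `k(A)` is
the number of blocks, equals `(N-1)‼ · (N-3)‼`. -/
theorem sum_over_two_divisible_partitions (N : ℕ) (hN : Even N) (hN2 : 2 ≤ N) :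
    ∑ P ∈ Finset.univ.filter
        (fun P : Finset (Finset (Fin N)) =>
          IsFinsetPartition P ∧ ∀ B ∈ P, Even B.card),
      ((-1 : ℤ) ^ (P.card + 1) * ∏ B ∈ P, (Nat.factorial (B.card - 1) : ℤ)) =
      (Nat.doubleFactorial (N - 1) : ℤ) * (Nat.doubleFactorial (N - 3) : ℤ) := by
  have hset : Finset.univ.filter
        (fun P : Finset (Finset (Fin N)) =>
          IsFinsetPartition P ∧ ∀ B ∈ P, Even B.card)
      = Finset.univ.filter
        (fun P : Finset (Finset (Fin N)) =>
          IsPartOf Finset.univ P ∧ ∀ B ∈ P, Even B.card) := by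
    ext P
    simp only [Finset.mem_filter, Finset.mem_univ, true_and]
    constructor
    · rintro ⟨⟨h1, h2, h3⟩, hE⟩
      refine ⟨⟨h1, h2, ?_⟩, hE⟩
      ext x
      simp only [Finset.mem_biUnion, Finset.mem_univ, iff_true, id]
      exact h3 x
    · rintro ⟨⟨h1, h2, h3⟩, hE⟩
      refine ⟨⟨h1, h2, fun x => ?_⟩, hE⟩
      have : x ∈ P.biUnion id := by rw [h3]; exact Finset.mem_univ x
      simpa using Finset.mem_biUnion.1 this
  rw [hset]
  have heq : (Finset.univ : Finset (Fin N)).card = N := by simp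
  have := fpart_eq (N := N) N Finset.univ heq
  rw [fpart] at this
  rw [this, Ffun]
  have h0 : N ≠ 0 := by omega
  obtain ⟨k, hk⟩ : ∃ k, N = 2*k + 2 := by
    obtain ⟨r, hr⟩ := hN
    exact ⟨r - 1, by omega⟩
  have h2 : N/2 = k+1 := by omega
  simp only [h0, if_false, hN, if_true, h2, Ufun]
  have e1 : 2*(k+1)-1 = N - 1 := by omega
  have e2 : 2*(k+1)-3 = N - 3 := by omega
  rw [e1, e2]
  push_cast
  ring
end

section
/- For any even integer N ≥ 2, the number of permutations (α₁, α₂, …, α_N) of {1,…,N} such that α₁ = 1 and such that there is no odd index r with 1 < r < N for which α_r < α_s for all s > r (i.e., no odd position r > 1 at which α_r is strictly smaller than all subsequent entries), equals (N−1)!!·(N−3)!!. -/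
open Equiv Finset

/-- position `i` is a strict suffix minimum of `σ`. -/
def SMin {n : ℕ} (σ : Equiv.Perm (Fin n)) (i : Fin n) : Prop :=
  ∀ j, i < j → σ i < σ j

def stripPerm {n : ℕ} (σ : Equiv.Perm (Fin (n + 1))) : Equiv.Perm (Fin n) :=
  Equiv.removeNone ((finSuccEquiv n).symm.trans (σ.trans (finSuccEquiv' (σ 0))))

lemma stripPerm_spec {n : ℕ} (σ : Equiv.Perm (Fin (n + 1))) (x : Fin n) :
    σ x.succ = (σ 0).succAbove (stripPerm σ x) := by
  set e := ((finSuccEquiv n).symm.trans (σ.trans (finSuccEquiv' (σ 0)))) with he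
  have hsome : e (some x) = finSuccEquiv' (σ 0) (σ x.succ) := by
    simp [he, Equiv.trans_apply]
  have hne : σ x.succ ≠ σ 0 := by
    intro h
    exact (Fin.succ_ne_zero x) (σ.injective h)
  have hex : ∃ x', e (some x) = some x' := by
    rw [hsome]
    rcases h : finSuccEquiv' (σ 0) (σ x.succ) with _ | y
    · exfalso
      apply hne
      have := congrArg (finSuccEquiv' (σ 0)).symm h
      simpa [finSuccEquiv'_symm_none] using this
    · exact ⟨y, rfl⟩
  have h1 : some (stripPerm σ x) = e (some x) := Equiv.removeNone_some _ hex
  rw [hsome] at h1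
  have := congrArg (finSuccEquiv' (σ 0)).symm h1
  simpa [finSuccEquiv'_symm_some] using this.symm

def unstripPerm {n : ℕ} (p : Fin (n + 1)) (τ : Equiv.Perm (Fin n)) : Equiv.Perm (Fin (n + 1)) :=
  (finSuccEquiv n).trans ((τ.optionCongr).trans (finSuccEquiv' p).symm)

lemma unstripPerm_zero {n : ℕ} (p : Fin (n + 1)) (τ : Equiv.Perm (Fin n)) :
    unstripPerm p τ 0 = p := by
  simp [unstripPerm, finSuccEquiv'_symm_none]

lemma unstripPerm_succ {n : ℕ} (p : Fin (n + 1)) (τ : Equiv.Perm (Fin n)) (x : Fin n) :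
    unstripPerm p τ x.succ = p.succAbove (τ x) := by
  simp [unstripPerm, finSuccEquiv'_symm_some]

def stripEquiv (n : ℕ) : Equiv.Perm (Fin (n + 1)) ≃ Fin (n + 1) × Equiv.Perm (Fin n) where
  toFun σ := (σ 0, stripPerm σ)
  invFun x := unstripPerm x.1 x.2
  left_inv σ := by
    ext i
    cases i using Fin.cases with
    | zero => simp [unstripPerm_zero]
    | succ x => rw [unstripPerm_succ, ← stripPerm_spec]
  right_inv := by
    rintro ⟨p, τ⟩
    have h0 : unstripPerm p τ 0 = p := unstripPerm_zero p τ
    refine Prod.ext h0 ?_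
    ext x
    have := stripPerm_spec (unstripPerm p τ) x
    rw [unstripPerm_succ, h0] at this
    exact congrArg Fin.val (Fin.succAbove_right_injective (p := p) this).symm

lemma smin_zero_iff {n : ℕ} (σ : Equiv.Perm (Fin (n + 1))) :
    SMin σ 0 ↔ σ 0 = 0 := by
  constructor
  · intro h
    by_contra hne
    obtain ⟨j, hj⟩ := σ.surjective 0
    have hj0 : j ≠ 0 := by rintro rfl; exact hne hj
    have := h j (Fin.pos_of_ne_zero hj0)
    rw [hj] at this
    exact absurd this (Fin.not_lt_zero _).elim
  · intro h j hj
    rw [h]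
    exact Fin.pos_of_ne_zero fun h' => (Fin.pos_iff_ne_zero.mp hj) (σ.injective (h'.trans h.symm))

lemma smin_succ_iff {n : ℕ} (σ : Equiv.Perm (Fin (n + 1))) (x : Fin n) :
    SMin σ x.succ ↔ SMin (stripPerm σ) x := by
  constructor
  · intro h y hy
    have := h y.succ (by simpa using hy)
    rw [stripPerm_spec σ x, stripPerm_spec σ y] at this
    exact (Fin.succAbove_lt_succAbove_iff).mp this
  · intro h j hj
    have hj0 : j ≠ 0 := by
      intro h'
      subst h'
      exact absurd hj (Fin.not_lt_zero _).elim
    obtain ⟨y, rfl⟩ := Fin.eq_succ_of_ne_zero hj0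
    rw [stripPerm_spec σ x, stripPerm_spec σ y]
    exact (Fin.succAbove_lt_succAbove_iff).mpr (h y (by simpa using hj))

def condAt : Option Bool → Prop → Prop
  | some true, P => P
  | some false, P => ¬P
  | none, _ => True

lemma condAt_congr {o : Option Bool} {P Q : Prop} (h : P ↔ Q) : condAt o P ↔ condAt o Q := by
  rcases o with _ | _ | _ <;> simp [condAt, h]

def wAt : Option Bool → ℕ → ℕ
  | some true, _ => 1
  | some false, k => k - 1
  | none, k => k

def pCond {n : ℕ} (c : ℕ → Option Bool) (σ : Equiv.Perm (Fin n)) : Prop :=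
  ∀ i : Fin n, condAt (c i.val) (SMin σ i)

def pWeight (n : ℕ) (c : ℕ → Option Bool) : ℕ :=
  ∏ i ∈ Finset.range n, wAt (c i) (n - i)

lemma card_condAt_zero {n : ℕ} (o : Option Bool) :
    Nat.card {p : Fin (n + 1) // condAt o (p = 0)} = wAt o (n + 1) := by
  rcases o with _ | _ | _
  · rw [Nat.card_congr (Equiv.subtypeUnivEquiv
        (p := fun p : Fin (n+1) => condAt none (p = 0)) fun _ => trivial)]
    simp [wAt]
  · rw [show (fun p : Fin (n+1) => condAt (some false) (p = 0)) = (fun p => p ≠ 0) from rfl,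
      Nat.card_congr (⟨fun p => p.1.pred p.2, fun i => ⟨i.succ, Fin.succ_ne_zero i⟩,
        fun p => by simp, fun i => by simp⟩ : {p : Fin (n+1) // p ≠ 0} ≃ Fin n)]
    simp [wAt]
  · haveI : Unique {p : Fin (n + 1) // condAt (some true) (p = 0)} :=
      ⟨⟨⟨0, rfl⟩⟩, by rintro ⟨p, hp⟩; exact Subtype.ext hp⟩
    exact Nat.card_unique

lemma card_pCond : ∀ (n : ℕ) (c : ℕ → Option Bool),
    Nat.card {σ : Equiv.Perm (Fin n) // pCond c σ} = pWeight n c := by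
  intro n
  induction n with
  | zero =>
    intro c
    have : ∀ σ : Equiv.Perm (Fin 0), pCond c σ := fun σ i => i.elim0
    rw [Nat.card_congr (Equiv.subtypeUnivEquiv this)]
    simp [pWeight]
  | succ n ih =>
    intro c
    have key : ∀ σ : Equiv.Perm (Fin (n + 1)),
        pCond c σ ↔ condAt (c 0) (σ 0 = 0) ∧ pCond (fun i => c (i + 1)) (stripPerm σ) := by
      intro σ
      constructor
      · intro h
        refine ⟨(condAt_congr (smin_zero_iff σ)).mp (h 0), fun x =>
          (condAt_congr (smin_succ_iff σ x)).mp (h x.succ)⟩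
      · rintro ⟨h0, hs⟩ i
        cases i using Fin.cases with
        | zero => exact (condAt_congr (smin_zero_iff σ)).mpr h0
        | succ x => exact (condAt_congr (smin_succ_iff σ x)).mpr (hs x)
    have e1 : {σ : Equiv.Perm (Fin (n + 1)) // pCond c σ} ≃
        {x : Fin (n + 1) × Equiv.Perm (Fin n) //
          condAt (c 0) (x.1 = 0) ∧ pCond (fun i => c (i + 1)) x.2} :=
      (stripEquiv n).subtypeEquiv (fun σ => key σ)
    rw [Nat.card_congr (e1.trans (Equiv.subtypeProdEquivProd (p := fun p : Fin (n+1) => condAt (c 0) (p = 0)) (q := pCond fun i => c (i + 1)))), Nat.card_prod,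
      card_condAt_zero, ih]
    unfold pWeight
    rw [Finset.prod_range_succ', mul_comm]
    simp only [Nat.succ_sub_succ, Nat.sub_zero]

lemma oddprod : ∀ k : ℕ,
    ∏ j ∈ Finset.range (2 * k + 1), (if Odd j then j else j + 1) =
      Nat.doubleFactorial (2 * k + 1) * Nat.doubleFactorial (2 * k - 1) := by
  intro k
  induction k with
  | zero => simp [Nat.doubleFactorial]
  | succ k ih =>
    have e0 : 2 * (k + 1) + 1 = (2 * k + 1) + 1 + 1 := by ring
    have e2 : 2 * (k + 1) - 1 = 2 * k + 1 := by omega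
    rw [e0, Finset.prod_range_succ, Finset.prod_range_succ, ih, e2]
    have h1 : Odd (2 * k + 1) := ⟨k, by ring⟩
    have h2 : ¬ Odd (2 * k + 1 + 1) := by simp [Nat.odd_iff]; omega
    rw [if_pos h1, if_neg h2]
    have e3 : (2 * k + 1) + 1 + 1 = (2 * k + 1) + 2 := by ring
    rw [e3, Nat.doubleFactorial_add_two]
    have e4 : Nat.doubleFactorial (2 * k + 1) = (2 * k + 1) * Nat.doubleFactorial (2 * k - 1) := by
      have := Nat.doubleFactorial_add_one (2 * k)
      simpa using this
    calc Nat.doubleFactorial (2 * k + 1) * Nat.doubleFactorial (2 * k - 1) * (2 * k + 1) *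
          (2 * k + 1 + 1 + 1)
        = (2 * k + 1 + 2) * ((2 * k + 1) * Nat.doubleFactorial (2 * k - 1)) *
          Nat.doubleFactorial (2 * k + 1) := by ring
      _ = (2 * k + 1 + 2) * Nat.doubleFactorial (2 * k + 1) *
          Nat.doubleFactorial (2 * k + 1) := by rw [← e4]

/-- the concrete constraint pattern. -/
def cFun : ℕ → Option Bool := fun i =>
  if i = 0 then some true else if Even i then some false else none

lemma pWeight_cFun (N : ℕ) (hN : Even N) (hN2 : 2 ≤ N) :
    pWeight N cFun = Nat.doubleFactorial (N - 1) * Nat.doubleFactorial (N - 3) := by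
  obtain ⟨m, hm⟩ := hN
  obtain ⟨k, rfl⟩ : ∃ k, N = 2 * k + 2 := ⟨m - 1, by omega⟩
  have hval : ∀ j ∈ Finset.range (2 * k + 2),
      wAt (cFun (2 * k + 2 - 1 - j)) (2 * k + 2 - (2 * k + 2 - 1 - j)) =
        (if j = 2 * k + 1 then 1 else if Odd j then j else j + 1) := by
    intro j hj
    rw [Finset.mem_range] at hj
    have hNj : 2 * k + 2 - (2 * k + 2 - 1 - j) = j + 1 := by omega
    rw [hNj]
    by_cases h1 : j = 2 * k + 1
    · have h0 : 2 * k + 2 - 1 - j = 0 := by omega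
      rw [h0, if_pos h1]
      simp [cFun, wAt]
    · have hne : 2 * k + 1 - j ≠ 0 := by omega
      rw [if_neg h1]
      rcases Nat.even_or_odd j with he | ho
      · have hodd : ¬ Even (2 * k + 1 - j) := by
          obtain ⟨t, ht⟩ := he
          intro hcon
          obtain ⟨u, hu⟩ := hcon
          omega
        rw [if_neg (by simpa [Nat.not_odd_iff_even] using he)]
        simp [cFun, hne, hodd, wAt]
      · have hev : Even (2 * k + 1 - j) := by
          obtain ⟨t, ht⟩ := ho
          exact ⟨k - t, by omega⟩
        rw [if_pos ho]
        simp [cFun, hne, hev, wAt]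
  unfold pWeight
  rw [← Finset.prod_range_reflect, Finset.prod_congr rfl hval]
  have h21 : 2 * k + 2 = (2 * k + 1) + 1 := rfl
  rw [h21, Finset.prod_range_succ, if_pos rfl, mul_one]
  have hstep : ∀ j ∈ Finset.range (2 * k + 1),
      (if j = 2 * k + 1 then 1 else if Odd j then j else j + 1) =
      (if Odd j then j else j + 1) := by
    intro j hj
    rw [Finset.mem_range] at hj
    rw [if_neg (by omega)]
  rw [Finset.prod_congr rfl hstep, oddprod k]
  have e5 : 2 * k + 2 - 1 = 2 * k + 1 := by omega
  have e6 : 2 * k + 2 - 3 = 2 * k - 1 := by omega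
  rw [e5, e6]

/-- For any even `N ≥ 2`, the number of permutations `(α₁, …, α_N)` of `{1,…,N}` (here encoded
as permutations `σ` of `Fin N`, with `α_r = σ (r-1) + 1`) such that `α₁ = 1` and such that
there is no odd index `r` with `1 < r < N` for which `α_r < α_s` for all `s > r`, equals
`(N-1)‼ · (N-3)‼`. -/
theorem count_permutations_without_odd_minimal_positions (N : ℕ) (hN : Even N) (hN2 : 2 ≤ N) :
    Nat.card {σ : Equiv.Perm (Fin N) //
      σ ⟨0, by omega⟩ = ⟨0, by omega⟩ ∧
      ¬ ∃ r : ℕ, ∃ _ : Odd r, ∃ _ : 1 < r, ∃ hr : r < N,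
        ∀ s : ℕ, ∀ hrs : r < s, ∀ hs : s ≤ N,
          σ ⟨r - 1, by omega⟩ < σ ⟨s - 1, by omega⟩} =
      Nat.doubleFactorial (N - 1) * Nat.doubleFactorial (N - 3) := by
  obtain ⟨M, rfl⟩ : ∃ M, N = M + 1 := ⟨N - 1, by omega⟩
  have hiff : ∀ σ : Equiv.Perm (Fin (M + 1)),
      (σ ⟨0, by omega⟩ = ⟨0, by omega⟩ ∧
      ¬ ∃ r : ℕ, ∃ _ : Odd r, ∃ _ : 1 < r, ∃ hr : r < M + 1,
        ∀ s : ℕ, ∀ hrs : r < s, ∀ hs : s ≤ M + 1,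
          σ ⟨r - 1, by omega⟩ < σ ⟨s - 1, by omega⟩) ↔ pCond cFun σ := by
    intro σ
    have hmk0 : (⟨0, by omega⟩ : Fin (M + 1)) = 0 := rfl
    -- inner iff
    have inner_iff : ∀ (r : ℕ) (h1 : 1 ≤ r) (hr : r < M + 1),
        (∀ s : ℕ, ∀ _ : r < s, ∀ hs : s ≤ M + 1,
          σ ⟨r - 1, by omega⟩ < σ ⟨s - 1, by omega⟩) ↔
        SMin σ ⟨r - 1, by omega⟩ := by
      intro r h1 hr
      constructor
      · intro h j hj
        have hj' : r - 1 < j.val := hj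
        have := h (j.val + 1) (by omega) (by omega)
        have hjeq : (⟨j.val + 1 - 1, by omega⟩ : Fin (M + 1)) = j := Fin.ext (by simp)
        rwa [hjeq] at this
      · intro h s hrs hs
        have := h ⟨s - 1, by omega⟩ (show r - 1 < s - 1 by omega)
        exact this
    constructor
    · rintro ⟨h0, hnex⟩ i
      by_cases hi0 : i.val = 0
      · have : i = 0 := Fin.ext hi0
        subst this
        have : cFun (0 : ℕ) = some true := rfl
        rw [show ((0 : Fin (M+1)).val) = 0 from rfl, this]
        show SMin σ 0
        rw [smin_zero_iff]
        rw [hmk0] at h0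
        exact h0
      · rcases Nat.even_or_odd i.val with he | ho
        · have : cFun i.val = some false := by simp [cFun, hi0, he]
          rw [this]
          show ¬ SMin σ i
          intro hsm
          apply hnex
          have hrlt : i.val + 1 < M + 1 := by
            obtain ⟨t, ht⟩ := he
            obtain ⟨u, hu⟩ := hN
            omega
          refine ⟨i.val + 1, Even.add_one he, by omega, hrlt, ?_⟩
          have hieq : (⟨i.val + 1 - 1, by omega⟩ : Fin (M + 1)) = i := Fin.ext (by simp)
          rw [(inner_iff (i.val + 1) (by omega) hrlt)]
          rwa [hieq]
        · have : cFun i.val = none := by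
            simp [cFun, hi0, Nat.not_even_iff_odd.mpr ho]
          rw [this]
          trivial
    · intro h
      constructor
      · have h0 := h 0
        rw [show ((0 : Fin (M+1)).val) = 0 from rfl, show cFun 0 = some true from rfl] at h0
        have : SMin σ 0 := h0
        rw [smin_zero_iff] at this
        rw [hmk0]
        exact this
      · rintro ⟨r, hodd, h1, hr, hall⟩
        have hsm : SMin σ ⟨r - 1, by omega⟩ := (inner_iff r (by omega) hr).mp hall
        have hi := h ⟨r - 1, by omega⟩
        have hval : ((⟨r - 1, by omega⟩ : Fin (M + 1)).val) = r - 1 := rfl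
        have hevr : Even (r - 1) := by
          obtain ⟨t, ht⟩ := hodd
          exact ⟨t, by omega⟩
        have hne : r - 1 ≠ 0 := by omega
        rw [hval, show cFun (r - 1) = some false by simp [cFun, hne, hevr]] at hi
        exact hi hsm
  rw [Nat.card_congr (Equiv.subtypeEquivRight hiff), card_pCond]
  exact pWeight_cFun (M + 1) hN hN2
end
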